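/- Let f(x) = max{a_i^T x + b_i : i ∈ [p]} be a convex continuous piecewise linear function on ℝ^n, given as the maximum of p affine functions. Then there exist integer coefficients c_S ∈ ℤ, indexed by the nonempty subsets S ⊆ [p] with |S| ≤ n+1, such that f(x) = Σ_{S ⊆ [p], |S| ≤ n+1} c_S · max{a_i^T x + b_i : i ∈ S} for all x ∈ ℝ^n. -/

import Mathlib

/-- Maximum of `v` over a finite set `S` (junk value `0` if `S = ∅`). -/
noncomputable def maxOnFinset {ι : Type*} (S : Finset ι) (v : ι → ℝ) : ℝ :=
  if h : S.Nonempty then S.sup' h v else 0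

/-- `f ∈ MAX_n(p)`: `f` is a finite linear combination of maxima of (at most) `p`
affine functions. -/
def InMAX (n p : ℕ) (f : (Fin n → ℝ) → ℝ) : Prop :=
  ∃ (N : ℕ) (lam : Fin N → ℝ) (a : Fin N → Fin p → Fin n → ℝ) (b : Fin N → Fin p → ℝ),
    ∀ x, f x = ∑ j, lam j * maxOnFinset Finset.univ (fun i => (∑ t, a j i t * x t) + b j i)

open Finset

private lemma max_add_max (M u v : ℝ) :
    max M u + max M v = max M (max u v) + max M (min u v) := by
  rcases le_total u v with h | h
  · rw [max_eq_right h, min_eq_left h, add_comm]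
  · rw [max_eq_left h, min_eq_right h]

private lemma ie_aux {ι : Type*} [DecidableEq ι] (y : ι → ℝ) (N : Finset ι)
    (hN : N.Nonempty) :
    ∀ M : ℝ, ∑ T ∈ N.powerset, (-1 : ℝ) ^ T.card *
        (if h : T.Nonempty then max M (T.sup' h y) else M)
      = M - max M (N.inf' hN y) := by
  induction hN using Finset.Nonempty.cons_induction with
  | singleton a =>
      intro M
      rw [show ({a} : Finset ι).powerset = {∅, {a}} from rfl,
        sum_pair (fun h => (Finset.singleton_ne_empty a) h.symm)]
      rw [dif_neg (by simp), dif_pos (singleton_nonempty a)]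
      simp only [card_empty, pow_zero, one_mul, card_singleton, pow_one, sup'_singleton,
        inf'_singleton]
      ring
  | cons a s ha hs ih =>
      intro M
      have hlhs : ∑ T ∈ (cons a s ha).powerset, (-1 : ℝ) ^ T.card *
            (if h : T.Nonempty then max M (T.sup' h y) else M)
          = ∑ T ∈ s.powerset, (-1 : ℝ) ^ T.card *
              (if h : T.Nonempty then max M (T.sup' h y) else M)
            + ∑ T ∈ s.powerset, (-1 : ℝ) ^ (insert a T).card *
              (if h : (insert a T).Nonempty then max M ((insert a T).sup' h y) else M) := by
        rw [Finset.cons_eq_insert, Finset.sum_powerset_insert ha]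
      rw [hlhs]
      have h2 : ∀ T ∈ s.powerset,
          (-1 : ℝ) ^ (insert a T).card *
            (if h : (insert a T).Nonempty then max M ((insert a T).sup' h y) else M)
          = -((-1 : ℝ) ^ T.card *
            (if h : T.Nonempty then max (max M (y a)) (T.sup' h y) else max M (y a))) := by
        intro T hT
        have haT : a ∉ T := fun h => ha (mem_powerset.1 hT h)
        rw [dif_pos (insert_nonempty a T), card_insert_of_notMem haT]
        by_cases hT2 : T.Nonempty
        · rw [dif_pos hT2, Finset.sup'_insert hT2]
          rw [show max M (y a ⊔ T.sup' hT2 y) = max (max M (y a)) (T.sup' hT2 y) from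
            (max_assoc M (y a) _).symm]
          ring
        · rw [dif_neg hT2, Finset.not_nonempty_iff_eq_empty.1 hT2]
          simp only [LawfulSingleton.insert_empty_eq, sup'_singleton, card_empty, pow_zero, zero_add, pow_one]
          ring
      rw [Finset.sum_congr rfl h2, Finset.sum_neg_distrib, ih M, ih (max M (y a))]
      rw [Finset.inf'_cons hs]
      have hmm : max (max M (y a)) (s.inf' hs y) = max M (max (y a) (s.inf' hs y)) :=
        max_assoc M (y a) _
      rw [hmm, show (y a ⊓ s.inf' hs y) = min (y a) (s.inf' hs y) from rfl]
      linarith [max_add_max M (y a) (s.inf' hs y)]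

private lemma key_decomp {ι : Type*} [DecidableEq ι] (y : ι → ℝ) (S N : Finset ι)
    (hNS : N ⊆ S) (hN : N.Nonempty) (hA : (S \ N).Nonempty)
    (hdom : N.inf' hN y ≤ (S \ N).sup' hA y) :
    maxOnFinset S y = ∑ T ∈ N.powerset.erase N,
      (((-1 : ℤ) ^ (N.card + T.card + 1) : ℤ) : ℝ) * maxOnFinset ((S \ N) ∪ T) y := by
  set M := (S \ N).sup' hA y with hM
  have hterm : ∀ T ∈ N.powerset, maxOnFinset ((S \ N) ∪ T) y
      = (if h : T.Nonempty then max M (T.sup' h y) else M) := by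
    intro T hT
    by_cases hT2 : T.Nonempty
    · rw [dif_pos hT2, maxOnFinset, dif_pos (hA.mono subset_union_left)]
      exact Finset.sup'_union hA hT2 y
    · rw [dif_neg hT2, Finset.not_nonempty_iff_eq_empty.1 hT2, union_empty, maxOnFinset, dif_pos hA]
  have h0 : ∑ T ∈ N.powerset, (-1 : ℝ) ^ T.card * maxOnFinset ((S \ N) ∪ T) y = 0 := by
    rw [Finset.sum_congr rfl (fun T hT => by rw [hterm T hT]), ie_aux y N hN M,
      max_eq_left hdom, sub_self]
  have hsplit := Finset.add_sum_erase N.powerset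
    (fun T => (-1 : ℝ) ^ T.card * maxOnFinset ((S \ N) ∪ T) y) (mem_powerset_self N)
  rw [h0] at hsplit
  simp only [sdiff_union_of_subset hNS] at hsplit
  have hsq : ((-1 : ℝ)) ^ N.card * ((-1 : ℝ)) ^ N.card = 1 := by
    rw [← mul_pow]; norm_num
  calc maxOnFinset S y = ((-1 : ℝ) ^ N.card * (-1 : ℝ) ^ N.card) * maxOnFinset S y := by
        rw [hsq, one_mul]
    _ = (-1 : ℝ) ^ N.card *
        -(∑ T ∈ N.powerset.erase N, (-1 : ℝ) ^ T.card * maxOnFinset ((S \ N) ∪ T) y) := by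
        rw [mul_assoc]; congr 1; linarith [hsplit]
    _ = _ := by
        rw [← Finset.sum_neg_distrib, Finset.mul_sum]
        refine Finset.sum_congr rfl fun T hT => ?_
        push_cast
        ring

private lemma exists_relation {n p : ℕ} (a : Fin p → Fin n → ℝ) (b : Fin p → ℝ)
    (S : Finset (Fin p)) (hcard : n + 2 ≤ S.card) :
    ∃ lam : Fin p → ℝ, (∃ i ∈ S, lam i ≠ 0) ∧ (∑ i ∈ S, lam i = 0) ∧
      (∀ t, ∑ i ∈ S, lam i * a i t = 0) ∧ 0 ≤ ∑ i ∈ S, lam i * b i := by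
  classical
  set v : {x // x ∈ S} → (Fin n → ℝ) × ℝ := fun i => (a i.1, 1) with hv
  have hnli : ¬ LinearIndependent ℝ v := by
    intro h
    have hle := h.fintype_card_le_finrank
    have h1 : Fintype.card {x // x ∈ S} = S.card := Fintype.card_coe S
    have h2 : Module.finrank ℝ ((Fin n → ℝ) × ℝ) = n + 1 := by simp
    omega
  obtain ⟨g, hg0, i0, hgi0⟩ := Fintype.not_linearIndependent_iff.1 hnli
  have hg0' : ∑ i ∈ S.attach, g i • v i = 0 := by simpa using hg0
  have hvec0 : ∑ i ∈ S.attach, g i • a i.1 = 0 := by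
    have := congrArg Prod.fst hg0'
    simpa [hv, Prod.fst_sum] using this
  have hfst' : ∀ t, ∑ i ∈ S.attach, g i * a i.1 t = 0 := by
    intro t
    have := congrArg (fun w => w t) hvec0
    simpa [Finset.sum_apply] using this
  have hsnd' : ∑ i ∈ S.attach, g i = 0 := by
    have := congrArg Prod.snd hg0'
    simpa [hv, Prod.snd_sum] using this
  obtain ⟨G, hGi0, hGsum, hGvec, hGb⟩ : ∃ G : {x // x ∈ S} → ℝ, G i0 ≠ 0 ∧
      (∑ i ∈ S.attach, G i = 0) ∧ (∀ t, ∑ i ∈ S.attach, G i * a i.1 t = 0) ∧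
      0 ≤ ∑ i ∈ S.attach, G i * b i.1 := by
    rcases le_total 0 (∑ i ∈ S.attach, g i * b i.1) with hd | hd
    · exact ⟨g, hgi0, hsnd', hfst', hd⟩
    · refine ⟨fun i => -g i, by simpa using hgi0, by simp [Finset.sum_neg_distrib, hsnd'],
        fun t => by simp [neg_mul, Finset.sum_neg_distrib, hfst' t], ?_⟩
      simp only [neg_mul, Finset.sum_neg_distrib]
      linarith
  have key : ∀ (z : Fin p → ℝ),
      ∑ i ∈ S, (fun j => if h : j ∈ S then G ⟨j, h⟩ else 0) i * z i
        = ∑ i ∈ S.attach, G i * z i.1 := by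
    intro z
    rw [← Finset.sum_attach S (fun j => (if h : j ∈ S then G ⟨j, h⟩ else 0) * z j)]
    exact Finset.sum_congr rfl fun i _ => by rw [dif_pos i.2]
  refine ⟨fun j => if h : j ∈ S then G ⟨j, h⟩ else 0, ⟨i0.1, i0.2, by simpa using hGi0⟩,
    ?_, fun t => ?_, ?_⟩
  · have := key (fun _ => 1); simpa [hGsum] using this
  · rw [key]; exact hGvec t
  · rw [key]; exact hGb

private lemma domination {n p : ℕ} (a : Fin p → Fin n → ℝ) (b : Fin p → ℝ)
    (S N : Finset (Fin p)) (lam : Fin p → ℝ)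
    (hsum : ∑ i ∈ S, lam i = 0) (hvec : ∀ t, ∑ i ∈ S, lam i * a i t = 0)
    (hb : 0 ≤ ∑ i ∈ S, lam i * b i)
    (hNS : N ⊆ S) (hN : N.Nonempty) (hA : (S \ N).Nonempty)
    (hNneg : ∀ i ∈ N, lam i < 0) (hpos : ∀ i ∈ S \ N, 0 ≤ lam i)
    (x : Fin n → ℝ) :
    N.inf' hN (fun i => (∑ t, a i t * x t) + b i)
      ≤ (S \ N).sup' hA (fun i => (∑ t, a i t * x t) + b i) := by
  set ℓ : Fin p → ℝ := fun i => (∑ t, a i t * x t) + b i with hℓ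
  have e0 : ∑ i ∈ S, lam i * (∑ t, a i t * x t) = 0 := by
    calc ∑ i ∈ S, lam i * (∑ t, a i t * x t)
        = ∑ i ∈ S, ∑ t, lam i * a i t * x t := by
          refine sum_congr rfl fun i _ => ?_
          rw [Finset.mul_sum]
          exact sum_congr rfl fun t _ => by ring
      _ = ∑ t, ∑ i ∈ S, lam i * a i t * x t := Finset.sum_comm
      _ = ∑ t, (∑ i ∈ S, lam i * a i t) * x t := by
          refine sum_congr rfl fun t _ => ?_
          rw [Finset.sum_mul]
      _ = 0 := by simp [hvec]
  have e1 : ∑ i ∈ S, lam i * ℓ i = ∑ i ∈ S, lam i * b i := by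
    have : ∑ i ∈ S, lam i * ℓ i
        = ∑ i ∈ S, lam i * (∑ t, a i t * x t) + ∑ i ∈ S, lam i * b i := by
      rw [← Finset.sum_add_distrib]
      exact sum_congr rfl fun i _ => by rw [hℓ]; ring
    rw [this, e0, zero_add]
  set m := N.inf' hN ℓ with hm
  set M := (S \ N).sup' hA ℓ with hM
  set s := ∑ i ∈ S \ N, lam i with hs
  have hsplit : ∑ i ∈ S \ N, lam i + ∑ i ∈ N, lam i = 0 := by
    rw [Finset.sum_sdiff hNS]; exact hsum
  have hNs : ∑ i ∈ N, lam i < 0 := Finset.sum_neg hNneg hN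
  have hspos : 0 < s := by rw [hs]; linarith
  have h1 : ∑ i ∈ S \ N, lam i * ℓ i ≤ s * M := by
    rw [hs, Finset.sum_mul]
    exact sum_le_sum fun i hi => mul_le_mul_of_nonneg_left (le_sup' ℓ hi) (hpos i hi)
  have h2 : ∑ i ∈ N, lam i * ℓ i ≤ (∑ i ∈ N, lam i) * m := by
    rw [Finset.sum_mul]
    exact sum_le_sum fun i hi => mul_le_mul_of_nonpos_left (inf'_le ℓ hi) (le_of_lt (hNneg i hi))
  have e2 : ∑ i ∈ S \ N, lam i * ℓ i + ∑ i ∈ N, lam i * ℓ i = ∑ i ∈ S, lam i * ℓ i :=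
    Finset.sum_sdiff hNS
  have h3 : (∑ i ∈ N, lam i) * m = -(s * m) := by
    rw [show ∑ i ∈ N, lam i = -s from by rw [hs]; linarith]; ring
  have hsm : s * m ≤ s * M := by linarith
  exact le_of_mul_le_mul_left hsm hspos

/-- if `f(x) = max{⟨a i, x⟩ + b i : i ∈ [p]}` is a convex CPWL function
on `ℝⁿ`, then there are integer coefficients `c_S`, indexed by the nonempty subsets
`S ⊆ [p]` with `|S| ≤ n+1`, such that
`f(x) = Σ_S c_S · max{⟨a i, x⟩ + b i : i ∈ S}` for all `x`. -/
theorem convex_cpwl_integer_combination (n p : ℕ) (hp : 0 < p)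
    (a : Fin p → Fin n → ℝ) (b : Fin p → ℝ) (f : (Fin n → ℝ) → ℝ)
    (hf : ∀ x, f x = maxOnFinset Finset.univ (fun i => (∑ t, a i t * x t) + b i)) :
    ∃ c : Finset (Fin p) → ℤ, ∀ x, f x =
      ∑ S ∈ Finset.univ.filter (fun S : Finset (Fin p) => S.Nonempty ∧ S.card ≤ n + 1),
        (c S : ℝ) * maxOnFinset S (fun i => (∑ t, a i t * x t) + b i) := by
  classical
  suffices h : ∀ (k : ℕ) (S : Finset (Fin p)), S.Nonempty → S.card ≤ k →
      ∃ c : Finset (Fin p) → ℤ, ∀ x : Fin n → ℝ, maxOnFinset S (fun i => (∑ t, a i t * x t) + b i) =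
        ∑ T ∈ Finset.univ.filter (fun T : Finset (Fin p) => T.Nonempty ∧ T.card ≤ n + 1),
          (c T : ℝ) * maxOnFinset T (fun i => (∑ t, a i t * x t) + b i) by
    obtain ⟨c, hc⟩ := h p univ (univ_nonempty_iff.2 (Fin.pos_iff_nonempty.1 hp)) (by simp)
    exact ⟨c, fun x => by rw [hf x, hc x]⟩
  intro k
  induction k with
  | zero =>
      intro S hS h0
      exact absurd (Finset.card_eq_zero.1 (Nat.le_zero.1 h0)) hS.ne_empty
  | succ k ih =>
      intro S hS hcard
      by_cases hsmall : S.card ≤ n + 1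
      · refine ⟨fun T => if T = S then 1 else 0, fun x => ?_⟩
        rw [Finset.sum_eq_single S]
        · simp
        · intro T _ hTS; simp [hTS]
        · intro hSmem
          exact absurd (Finset.mem_filter.2 ⟨mem_univ S, hS, hsmall⟩) hSmem
      · have hn2 : n + 2 ≤ S.card := by omega
        obtain ⟨lam, ⟨i0, hi0S, hi0⟩, hsum, hvec, hb⟩ := exists_relation a b S hn2
        set N := S.filter (fun i => lam i < 0) with hNdef
        have hNS : N ⊆ S := filter_subset _ _
        have hN : N.Nonempty := by
          by_contra hcon
          rw [Finset.not_nonempty_iff_eq_empty, hNdef, Finset.filter_eq_empty_iff] at hcon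
          have hall : ∀ i ∈ S, 0 ≤ lam i := fun i hi => le_of_not_gt (hcon hi)
          exact hi0 ((Finset.sum_eq_zero_iff_of_nonneg hall).1 hsum i0 hi0S)
        have hA : (S \ N).Nonempty := by
          by_contra hcon
          rw [Finset.not_nonempty_iff_eq_empty, Finset.sdiff_eq_empty_iff_subset] at hcon
          have hall : ∀ i ∈ S, lam i ≤ 0 := fun i hi =>
            le_of_lt (Finset.mem_filter.1 (hcon hi)).2
          have hall' : ∀ i ∈ S, 0 ≤ -lam i := fun i hi => neg_nonneg.2 (hall i hi)
          have hz : ∑ i ∈ S, -lam i = 0 := by rw [Finset.sum_neg_distrib, hsum, neg_zero]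
          have := (Finset.sum_eq_zero_iff_of_nonneg hall').1 hz i0 hi0S
          exact hi0 (by linarith [this])
        have hNneg : ∀ i ∈ N, lam i < 0 := fun i hi => (Finset.mem_filter.1 hi).2
        have hpos : ∀ i ∈ S \ N, 0 ≤ lam i := by
          intro i hi
          rcases Finset.mem_sdiff.1 hi with ⟨hiS, hiN⟩
          by_contra hcon
          exact hiN (Finset.mem_filter.2 ⟨hiS, lt_of_not_ge hcon⟩)
        have hdom := domination a b S N lam hsum hvec hb hNS hN hA hNneg hpos
        have hdec : ∀ x : Fin n → ℝ, maxOnFinset S (fun i => (∑ t, a i t * x t) + b i)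
            = ∑ T ∈ N.powerset.erase N, (((-1 : ℤ) ^ (N.card + T.card + 1) : ℤ) : ℝ) *
                maxOnFinset ((S \ N) ∪ T) (fun i => (∑ t, a i t * x t) + b i) :=
          fun x => key_decomp _ S N hNS hN hA (hdom x)
        have hrep : ∀ T : Finset (Fin p), ∃ cT : Finset (Fin p) → ℤ,
            T ∈ N.powerset.erase N →
            ∀ x : Fin n → ℝ, maxOnFinset ((S \ N) ∪ T) (fun i => (∑ t, a i t * x t) + b i) =
              ∑ U ∈ Finset.univ.filter
                  (fun U : Finset (Fin p) => U.Nonempty ∧ U.card ≤ n + 1),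
                (cT U : ℝ) * maxOnFinset U (fun i => (∑ t, a i t * x t) + b i) := by
          intro T
          by_cases hT : T ∈ N.powerset.erase N
          · rcases Finset.mem_erase.1 hT with ⟨hTN, hTp⟩
            have hTsub : T ⊆ N := Finset.mem_powerset.1 hTp
            have hsubS : (S \ N) ∪ T ⊆ S :=
              Finset.union_subset (Finset.sdiff_subset) (hTsub.trans hNS)
            have hlt : ((S \ N) ∪ T).card < S.card := by
              apply Finset.card_lt_card
              refine ⟨hsubS, fun hcon => ?_⟩
              obtain ⟨j, hjN, hjT⟩ := Finset.exists_of_ssubset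
                (Finset.ssubset_iff_subset_ne.2 ⟨hTsub, hTN⟩)
              have hjS : j ∈ S := hNS hjN
              rcases Finset.mem_union.1 (hcon hjS) with hj | hj
              · exact (Finset.mem_sdiff.1 hj).2 hjN
              · exact hjT hj
            obtain ⟨cT, hcT⟩ := ih ((S \ N) ∪ T) (hA.mono Finset.subset_union_left)
              (by omega)
            exact ⟨cT, fun _ => hcT⟩
          · exact ⟨0, fun hcon => absurd hcon hT⟩
        choose cT hcT using hrep
        refine ⟨fun U => ∑ T ∈ N.powerset.erase N,
          (-1 : ℤ) ^ (N.card + T.card + 1) * cT T U, fun x => ?_⟩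
        rw [hdec x]
        have step1 : ∀ T ∈ N.powerset.erase N,
            (((-1 : ℤ) ^ (N.card + T.card + 1) : ℤ) : ℝ) *
              maxOnFinset ((S \ N) ∪ T) (fun i => (∑ t, a i t * x t) + b i)
            = ∑ U ∈ Finset.univ.filter
                  (fun U : Finset (Fin p) => U.Nonempty ∧ U.card ≤ n + 1),
                (((-1 : ℤ) ^ (N.card + T.card + 1) * cT T U : ℤ) : ℝ) *
                  maxOnFinset U (fun i => (∑ t, a i t * x t) + b i) := by
          intro T hT
          rw [hcT T hT x, Finset.mul_sum]
          refine Finset.sum_congr rfl fun U _ => ?_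
          push_cast
          ring
        rw [Finset.sum_congr rfl step1, Finset.sum_comm]
        refine Finset.sum_congr rfl fun U _ => ?_
        rw [← Finset.sum_mul]
        congr 1
        push_cast
        rfl
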